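/- Let f* be the Bayes optimal multimodal classifier on finite spaces, with some bounded loss ℓ taking values in [0,1], and let f1* be the Bayes optimal classifier using only X1. Then |L(f1*) - L(f*)|² ≤ I_p(X2;Y|X1), where L(f) denotes expected loss under p. -/

import Mathlib

open Finset

noncomputable section

namespace PaperPID

variable {Ω₁ Ω₂ Ω₃ : Type*} [Fintype Ω₁] [Fintype Ω₂] [Fintype Ω₃]

/-- Shannon entropy in bits of a finitely supported distribution given as a function. -/
def ent {α : Type*} [Fintype α] (p : α → ℝ) : ℝ := -∑ a, p a * Real.logb 2 (p a)

/-- `p` is a probability distribution. -/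
def IsProb {α : Type*} [Fintype α] (p : α → ℝ) : Prop := (∀ a, 0 ≤ p a) ∧ ∑ a, p a = 1

/-- marginal on the first coordinate -/
def m1 (p : Ω₁ × Ω₂ × Ω₃ → ℝ) : Ω₁ → ℝ := fun a => ∑ b, ∑ c, p (a, b, c)

/-- marginal on the second coordinate -/
def m2 (p : Ω₁ × Ω₂ × Ω₃ → ℝ) : Ω₂ → ℝ := fun b => ∑ a, ∑ c, p (a, b, c)

/-- marginal on the third coordinate -/
def m3 (p : Ω₁ × Ω₂ × Ω₃ → ℝ) : Ω₃ → ℝ := fun c => ∑ a, ∑ b, p (a, b, c)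

/-- marginal on coordinates (1,2) -/
def m12 (p : Ω₁ × Ω₂ × Ω₃ → ℝ) : Ω₁ × Ω₂ → ℝ := fun z => ∑ c, p (z.1, z.2, c)

/-- marginal on coordinates (1,3) -/
def m13 (p : Ω₁ × Ω₂ × Ω₃ → ℝ) : Ω₁ × Ω₃ → ℝ := fun z => ∑ b, p (z.1, b, z.2)

/-- marginal on coordinates (2,3) -/
def m23 (p : Ω₁ × Ω₂ × Ω₃ → ℝ) : Ω₂ × Ω₃ → ℝ := fun z => ∑ a, p (a, z.1, z.2)

/-- mutual information I(X₁;X₂) -/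
def I12 (p : Ω₁ × Ω₂ × Ω₃ → ℝ) : ℝ := ent (m1 p) + ent (m2 p) - ent (m12 p)

/-- mutual information I(X₁;Y) (Y the third coordinate) -/
def I13 (p : Ω₁ × Ω₂ × Ω₃ → ℝ) : ℝ := ent (m1 p) + ent (m3 p) - ent (m13 p)

/-- mutual information I(X₂;Y) -/
def I23 (p : Ω₁ × Ω₂ × Ω₃ → ℝ) : ℝ := ent (m2 p) + ent (m3 p) - ent (m23 p)

/-- joint mutual information I({X₁,X₂};Y) -/
def Ijoint (p : Ω₁ × Ω₂ × Ω₃ → ℝ) : ℝ := ent (m12 p) + ent (m3 p) - ent p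

/-- conditional mutual information I(X₁;X₂ | Y) -/
def CMI12_3 (p : Ω₁ × Ω₂ × Ω₃ → ℝ) : ℝ := ent (m13 p) + ent (m23 p) - ent p - ent (m3 p)

/-- conditional mutual information I(X₁;Y | X₂) -/
def CMI13_2 (p : Ω₁ × Ω₂ × Ω₃ → ℝ) : ℝ := ent (m12 p) + ent (m23 p) - ent p - ent (m2 p)

/-- conditional mutual information I(X₂;Y | X₁) -/
def CMI23_1 (p : Ω₁ × Ω₂ × Ω₃ → ℝ) : ℝ := ent (m12 p) + ent (m13 p) - ent p - ent (m1 p)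

/-- interaction information I(X₁;X₂;Y), defined as I(X₁;Y) - I(X₁;Y|X₂). -/
def interactionInfo (p : Ω₁ × Ω₂ × Ω₃ → ℝ) : ℝ := I13 p - CMI13_2 p

/-- Δ_{p_{1,2}}: distributions matching the (x₁,y) and (x₂,y) marginals of p. -/
def DeltaP (p : Ω₁ × Ω₂ × Ω₃ → ℝ) : Set (Ω₁ × Ω₂ × Ω₃ → ℝ) :=
  {q | IsProb q ∧ m13 q = m13 p ∧ m23 q = m23 p}

/-- Δ_{p_{1,2,12}}: distributions matching all pairwise marginals of p. -/
def DeltaAll (p : Ω₁ × Ω₂ × Ω₃ → ℝ) : Set (Ω₁ × Ω₂ × Ω₃ → ℝ) :=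
  {r | IsProb r ∧ m12 r = m12 p ∧ m13 r = m13 p ∧ m23 r = m23 p}

/-- Δ_{p_{12,y}}: couplings of the (x₁,x₂) marginal with the y marginal of p. -/
def DeltaCoup (p : Ω₁ × Ω₂ × Ω₃ → ℝ) : Set (Ω₁ × Ω₂ × Ω₃ → ℝ) :=
  {r | IsProb r ∧ m12 r = m12 p ∧ m3 r = m3 p}

/-- first marginal of a distribution on a product of two spaces -/
def mA {α β : Type*} [Fintype α] [Fintype β] (p : α × β → ℝ) : α → ℝ := fun a => ∑ b, p (a, b)

/-- second marginal of a distribution on a product of two spaces -/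
def mB {α β : Type*} [Fintype α] [Fintype β] (p : α × β → ℝ) : β → ℝ := fun b => ∑ a, p (a, b)

/-- mutual information of a joint distribution on a product of two spaces -/
def MI2 {α β : Type*} [Fintype α] [Fintype β] (p : α × β → ℝ) : ℝ := ent (mA p) + ent (mB p) - ent p

/-! ### Auxiliary lemmas -/

theorem pt_ineq {t : ℝ} (ht : 0 < t) : (t-1)^2/(2*(t+1)) ≤ t * Real.log t - t + 1 := by
  set u := Real.sqrt t with hu
  have hu0 : 0 < u := Real.sqrt_pos.2 ht
  have hut : u^2 = t := Real.sq_sqrt ht.le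
  have hlog : Real.log t = 2 * Real.log u := by
    rw [← hut, Real.log_pow]; push_cast; ring
  have h1 : 1 - u⁻¹ ≤ Real.log u := Real.one_sub_inv_le_log_of_pos hu0
  have huinv : u * u⁻¹ = 1 := mul_inv_cancel₀ hu0.ne'
  have h2 : 2*u^2 - 2*u ≤ 2*u^2 * Real.log u := by
    have := mul_le_mul_of_nonneg_left h1 (by positivity : (0:ℝ) ≤ 2*u^2)
    calc 2*u^2 - 2*u = 2*u^2 * (1 - u⁻¹) := by
          rw [mul_sub]; ring_nf; rw [mul_comm u]; nlinarith [huinv]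
    _ ≤ _ := this
  rw [hlog, ← hut, div_le_iff₀ (by positivity)]
  nlinarith [sq_nonneg (u-1), sq_nonneg (u^2-1), mul_nonneg (sq_nonneg (u-1)) (sq_nonneg (u+1))]

theorem kl_pt {a b : ℝ} (ha : 0 ≤ a) (hb : 0 ≤ b) (hab : b = 0 → a = 0) :
    (a-b)^2/(2*(a+b)) ≤ a * Real.log (a/b) - a + b := by
  rcases hb.eq_or_lt with hb0 | hb0
  · have ha0 : a = 0 := hab hb0.symm
    simp [ha0, ← hb0]
  rcases ha.eq_or_lt with ha0 | ha0
  · rw [← ha0]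
    have e : ((0:ℝ)-b)^2/(2*(0+b)) = b/2 := by field_simp; ring
    rw [e]; simp; linarith
  · have hab' : (0:ℝ) < a + b := by linarith
    have ht : 0 < a / b := div_pos ha0 hb0
    have key := mul_le_mul_of_nonneg_left (pt_ineq ht) hb0.le
    have e1 : b * ((a/b-1)^2/(2*(a/b+1))) = (a-b)^2/(2*(a+b)) := by
      field_simp
    have e2 : b * ((a/b) * Real.log (a/b) - a/b + 1) = a * Real.log (a/b) - a + b := by
      field_simp
    rw [e1, e2] at key
    exact key

/-- surrogate distribution making `X₂ ⊥ Y | X₁`, with the same pairwise marginals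
`(1,2)` and `(1,3)` as `p`. -/
def qq (p : Ω₁ × Ω₂ × Ω₃ → ℝ) : Ω₁ × Ω₂ × Ω₃ → ℝ :=
  fun z => m12 p (z.1, z.2.1) * m13 p (z.1, z.2.2) / m1 p z.1

lemma sum3 (g : Ω₁ × Ω₂ × Ω₃ → ℝ) :
    ∑ z : Ω₁ × Ω₂ × Ω₃, g z = ∑ a, ∑ b, ∑ c, g (a, b, c) := by
  rw [Fintype.sum_prod_type]
  exact Finset.sum_congr rfl fun a _ => Fintype.sum_prod_type _

section Marginals
variable (p : Ω₁ × Ω₂ × Ω₃ → ℝ) (hp : IsProb p)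
include hp
set_option linter.unusedSectionVars false

lemma m1_nonneg (a : Ω₁) : 0 ≤ m1 p a :=
  Finset.sum_nonneg fun _ _ => Finset.sum_nonneg fun _ _ => hp.1 _

lemma m12_nonneg (w : Ω₁ × Ω₂) : 0 ≤ m12 p w := Finset.sum_nonneg fun _ _ => hp.1 _
lemma m13_nonneg (w : Ω₁ × Ω₃) : 0 ≤ m13 p w := Finset.sum_nonneg fun _ _ => hp.1 _

lemma le_m12 (a : Ω₁) (b : Ω₂) (c : Ω₃) : p (a, b, c) ≤ m12 p (a, b) :=
  Finset.single_le_sum (fun c' _ => hp.1 (a, b, c')) (Finset.mem_univ c)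

lemma le_m13 (a : Ω₁) (b : Ω₂) (c : Ω₃) : p (a, b, c) ≤ m13 p (a, c) :=
  Finset.single_le_sum (fun b' _ => hp.1 (a, b', c)) (Finset.mem_univ b)

lemma m12_sum (a : Ω₁) : ∑ b, m12 p (a, b) = m1 p a := rfl

lemma m13_sum (a : Ω₁) : ∑ c, m13 p (a, c) = m1 p a := Finset.sum_comm

lemma m12_le_m1 (a : Ω₁) (b : Ω₂) : m12 p (a, b) ≤ m1 p a := by
  rw [← m12_sum p hp a]
  exact Finset.single_le_sum (fun b' _ => m12_nonneg p hp _) (Finset.mem_univ b)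

lemma m13_le_m1 (a : Ω₁) (c : Ω₃) : m13 p (a, c) ≤ m1 p a := by
  rw [← m13_sum p hp a]
  exact Finset.single_le_sum (fun c' _ => m13_nonneg p hp _) (Finset.mem_univ c)

lemma le_m1 (a : Ω₁) (b : Ω₂) (c : Ω₃) : p (a, b, c) ≤ m1 p a :=
  (le_m12 p hp a b c).trans (m12_le_m1 p hp a b)

lemma sum_m1 : ∑ a, m1 p a = 1 := by rw [← hp.2, sum3]; rfl

lemma qq_nonneg (z : Ω₁ × Ω₂ × Ω₃) : 0 ≤ qq p z :=
  div_nonneg (mul_nonneg (m12_nonneg p hp _) (m13_nonneg p hp _)) (m1_nonneg p hp _)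

lemma qq_pos {z : Ω₁ × Ω₂ × Ω₃} (hz : 0 < p z) : 0 < qq p z := by
  have h12 : 0 < m12 p (z.1, z.2.1) := lt_of_lt_of_le hz (le_m12 p hp z.1 z.2.1 z.2.2)
  have h13 : 0 < m13 p (z.1, z.2.2) := lt_of_lt_of_le hz (le_m13 p hp z.1 z.2.1 z.2.2)
  have h1 : 0 < m1 p z.1 := lt_of_lt_of_le hz (le_m1 p hp z.1 z.2.1 z.2.2)
  exact div_pos (mul_pos h12 h13) h1

lemma sum_qq : ∑ z, qq p z = 1 := by
  rw [sum3]
  have key : ∀ a : Ω₁, (∑ b, ∑ c, qq p (a, b, c)) = m1 p a := by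
    intro a
    by_cases h0 : m1 p a = 0
    · have h12 : ∀ b, m12 p (a, b) = 0 := fun b =>
        le_antisymm (h0 ▸ m12_le_m1 p hp a b) (m12_nonneg p hp _)
      simp [qq, h12, h0]
    · have : ∀ b : Ω₂, (∑ c, qq p (a, b, c)) = m12 p (a, b) := by
        intro b
        have : (∑ c, qq p (a, b, c)) = (∑ c, m13 p (a, c)) * m12 p (a, b) / m1 p a := by
          rw [Finset.sum_mul, Finset.sum_div]
          exact Finset.sum_congr rfl fun c _ => by rw [qq]; ring
        rw [this, m13_sum p hp, mul_comm, mul_div_assoc, div_self h0, mul_one]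
      rw [Finset.sum_congr rfl fun b _ => this b, m12_sum p hp a]
  rw [Finset.sum_congr rfl fun a _ => key a, sum_m1 p hp]

end Marginals

section Entropy
variable (p : Ω₁ × Ω₂ × Ω₃ → ℝ)

lemma ent_m1_eq : ent (m1 p) = -∑ z : Ω₁ × Ω₂ × Ω₃, p z * Real.logb 2 (m1 p z.1) := by
  rw [ent, sum3 (fun z => p z * Real.logb 2 (m1 p z.1))]
  congr 1
  refine Finset.sum_congr rfl fun a _ => ?_
  rw [m1, Finset.sum_mul]
  exact Finset.sum_congr rfl fun b _ => Finset.sum_mul _ _ _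

lemma ent_m12_eq :
    ent (m12 p) = -∑ z : Ω₁ × Ω₂ × Ω₃, p z * Real.logb 2 (m12 p (z.1, z.2.1)) := by
  rw [ent, sum3 (fun z => p z * Real.logb 2 (m12 p (z.1, z.2.1))), Fintype.sum_prod_type]
  congr 1
  refine Finset.sum_congr rfl fun a _ => Finset.sum_congr rfl fun b _ => ?_
  simp only [m12, Finset.sum_mul]

lemma ent_m13_eq :
    ent (m13 p) = -∑ z : Ω₁ × Ω₂ × Ω₃, p z * Real.logb 2 (m13 p (z.1, z.2.2)) := by
  rw [ent, sum3 (fun z => p z * Real.logb 2 (m13 p (z.1, z.2.2))), Fintype.sum_prod_type]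
  congr 1
  refine Finset.sum_congr rfl fun a _ => ?_
  rw [Finset.sum_comm]
  refine Finset.sum_congr rfl fun c _ => ?_
  simp only [m13, Finset.sum_mul]

lemma CMI_as_sum :
    CMI23_1 p = ∑ z : Ω₁ × Ω₂ × Ω₃, p z *
      (Real.logb 2 (p z) + Real.logb 2 (m1 p z.1)
        - Real.logb 2 (m12 p (z.1, z.2.1)) - Real.logb 2 (m13 p (z.1, z.2.2))) := by
  rw [CMI23_1, ent_m12_eq, ent_m13_eq, ent_m1_eq, ent]
  simp only [mul_add, mul_sub, Finset.sum_add_distrib, Finset.sum_sub_distrib]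
  ring

lemma kl_eq_CMI (hp : IsProb p) :
    ∑ z : Ω₁ × Ω₂ × Ω₃, p z * Real.log (p z / qq p z) = Real.log 2 * CMI23_1 p := by
  have hln2 : Real.log 2 ≠ 0 := (Real.log_pos one_lt_two).ne'
  rw [CMI_as_sum, Finset.mul_sum]
  refine Finset.sum_congr rfl fun z _ => ?_
  rcases (hp.1 z).eq_or_lt with h0 | h0
  · rw [← h0]; ring
  · have h12 : 0 < m12 p (z.1, z.2.1) := lt_of_lt_of_le h0 (le_m12 p hp z.1 z.2.1 z.2.2)
    have h13 : 0 < m13 p (z.1, z.2.2) := lt_of_lt_of_le h0 (le_m13 p hp z.1 z.2.1 z.2.2)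
    have h1 : 0 < m1 p z.1 := lt_of_lt_of_le h0 (le_m1 p hp z.1 z.2.1 z.2.2)
    have hql : Real.log (qq p z)
        = Real.log (m12 p (z.1, z.2.1)) + Real.log (m13 p (z.1, z.2.2)) - Real.log (m1 p z.1) := by
      simp only [qq]
      rw [Real.log_div (mul_pos h12 h13).ne' h1.ne', Real.log_mul h12.ne' h13.ne']
    rw [Real.log_div h0.ne' (qq_pos p hp h0).ne', hql, Real.logb, Real.logb, Real.logb, Real.logb]
    field_simp
    ring

end Entropy

section Classifier
set_option linter.unusedSectionVars false
variable {Yhat : Type*} [Fintype Yhat] (p : Ω₁ × Ω₂ × Ω₃ → ℝ) (ℓ : Yhat → Ω₃ → ℝ)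

lemma unimodal_loss_eq (g1 : Ω₁ → Yhat) :
    ∑ z : Ω₁ × Ω₂ × Ω₃, p z * ℓ (g1 z.1) z.2.2
      = ∑ a, ∑ c, m13 p (a, c) * ℓ (g1 a) c := by
  have e : (∑ z : Ω₁ × Ω₂ × Ω₃, p z * ℓ (g1 z.1) z.2.2)
      = ∑ a, ∑ b, ∑ c, p (a, b, c) * ℓ (g1 a) c := sum3 _
  rw [e]
  refine Finset.sum_congr rfl fun a _ => ?_
  rw [Finset.sum_comm]
  refine Finset.sum_congr rfl fun c _ => ?_
  simp only [m13, Finset.sum_mul]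

lemma f1_cond_opt (f1 : Ω₁ → Yhat)
    (hf1 : ∀ g1 : Ω₁ → Yhat,
      ∑ z : Ω₁ × Ω₂ × Ω₃, p z * ℓ (f1 z.1) z.2.2 ≤
      ∑ z : Ω₁ × Ω₂ × Ω₃, p z * ℓ (g1 z.1) z.2.2)
    (a : Ω₁) (yh : Yhat) :
    ∑ c, m13 p (a, c) * ℓ (f1 a) c ≤ ∑ c, m13 p (a, c) * ℓ yh c := by
  classical
  have h := hf1 (Function.update f1 a yh)
  rw [unimodal_loss_eq, unimodal_loss_eq] at h
  have key : ∑ a', ((∑ c, m13 p (a', c) * ℓ (Function.update f1 a yh a') c)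
      - (∑ c, m13 p (a', c) * ℓ (f1 a') c))
      = (∑ c, m13 p (a, c) * ℓ yh c) - (∑ c, m13 p (a, c) * ℓ (f1 a) c) := by
    rw [Finset.sum_eq_single a]
    · rw [Function.update_self]
    · intro b _ hb; rw [Function.update_of_ne hb]; ring
    · intro h; exact absurd (Finset.mem_univ a) h
  rw [Finset.sum_sub_distrib] at key
  linarith

lemma unimodal_le_qq_loss (hp : IsProb p)
    (f : Ω₁ × Ω₂ → Yhat) (f1 : Ω₁ → Yhat)
    (hf1 : ∀ g1 : Ω₁ → Yhat,
      ∑ z : Ω₁ × Ω₂ × Ω₃, p z * ℓ (f1 z.1) z.2.2 ≤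
      ∑ z : Ω₁ × Ω₂ × Ω₃, p z * ℓ (g1 z.1) z.2.2) :
    ∑ z : Ω₁ × Ω₂ × Ω₃, p z * ℓ (f1 z.1) z.2.2
      ≤ ∑ z : Ω₁ × Ω₂ × Ω₃, qq p z * ℓ (f (z.1, z.2.1)) z.2.2 := by
  have e : (∑ z : Ω₁ × Ω₂ × Ω₃, qq p z * ℓ (f (z.1, z.2.1)) z.2.2)
      = ∑ a, ∑ b, ∑ c, qq p (a, b, c) * ℓ (f (a, b)) c := sum3 _
  rw [e, unimodal_loss_eq]
  apply Finset.sum_le_sum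
  intro a _
  by_cases h0 : m1 p a = 0
  · have h13 : ∀ c, m13 p (a, c) = 0 := fun c =>
      le_antisymm (h0 ▸ m13_le_m1 p hp a c) (m13_nonneg p hp _)
    have h12 : ∀ b, m12 p (a, b) = 0 := fun b =>
      le_antisymm (h0 ▸ m12_le_m1 p hp a b) (m12_nonneg p hp _)
    simp [qq, h13, h12]
  · have inner : ∀ b, (∑ c, qq p (a, b, c) * ℓ (f (a, b)) c)
        = m12 p (a, b) / m1 p a * ∑ c, m13 p (a, c) * ℓ (f (a, b)) c := by
      intro b
      rw [Finset.mul_sum]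
      exact Finset.sum_congr rfl fun c _ => by rw [qq]; ring
    calc ∑ c, m13 p (a, c) * ℓ (f1 a) c
        = ∑ b, m12 p (a, b) / m1 p a * ∑ c, m13 p (a, c) * ℓ (f1 a) c := by
          rw [← Finset.sum_mul, ← Finset.sum_div, m12_sum p hp a, div_self h0, one_mul]
      _ ≤ ∑ b, m12 p (a, b) / m1 p a * ∑ c, m13 p (a, c) * ℓ (f (a, b)) c := by
          refine Finset.sum_le_sum fun b _ => ?_
          exact mul_le_mul_of_nonneg_left (f1_cond_opt p ℓ f1 hf1 a (f (a, b)))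
            (div_nonneg (m12_nonneg p hp _) (m1_nonneg p hp _))
      _ = ∑ b, ∑ c, qq p (a, b, c) * ℓ (f (a, b)) c :=
          Finset.sum_congr rfl fun b _ => (inner b).symm

end Classifier

/-- if f* is Bayes optimal among multimodal classifiers and f₁* among
unimodal (X₁-only) classifiers, for a loss ℓ with values in [0,1], then
|L(f₁*) - L(f*)|² ≤ I_p(X₂;Y|X₁). -/
theorem unimodal_multimodal_loss_gap {Yhat : Type*} [Fintype Yhat]
    (p : Ω₁ × Ω₂ × Ω₃ → ℝ) (hp : IsProb p)
    (ℓ : Yhat → Ω₃ → ℝ) (hℓ : ∀ a b, ℓ a b ∈ Set.Icc (0 : ℝ) 1)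
    (f : Ω₁ × Ω₂ → Yhat) (f1 : Ω₁ → Yhat)
    (hf : ∀ g : Ω₁ × Ω₂ → Yhat,
      ∑ z : Ω₁ × Ω₂ × Ω₃, p z * ℓ (f (z.1, z.2.1)) z.2.2 ≤
      ∑ z : Ω₁ × Ω₂ × Ω₃, p z * ℓ (g (z.1, z.2.1)) z.2.2)
    (hf1 : ∀ g1 : Ω₁ → Yhat,
      ∑ z : Ω₁ × Ω₂ × Ω₃, p z * ℓ (f1 z.1) z.2.2 ≤
      ∑ z : Ω₁ × Ω₂ × Ω₃, p z * ℓ (g1 z.1) z.2.2) :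
    (∑ z : Ω₁ × Ω₂ × Ω₃, p z * ℓ (f1 z.1) z.2.2 -
     ∑ z : Ω₁ × Ω₂ × Ω₃, p z * ℓ (f (z.1, z.2.1)) z.2.2) ^ 2 ≤ CMI23_1 p := by
  classical
  have hq1 : ∑ z, qq p z = 1 := sum_qq p hp
  have hln2pos : (0:ℝ) < Real.log 2 := Real.log_pos one_lt_two
  have hln2le : Real.log 2 ≤ 1 := by
    have := Real.log_le_sub_one_of_pos (by norm_num : (0:ℝ) < 2); linarith
  have L1 : ∑ z : Ω₁ × Ω₂ × Ω₃, p z * ℓ (f (z.1, z.2.1)) z.2.2 ≤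
      ∑ z : Ω₁ × Ω₂ × Ω₃, p z * ℓ (f1 z.1) z.2.2 := hf (fun w => f1 w.1)
  have L2 := unimodal_le_qq_loss p ℓ hp f f1 hf1
  set S := ∑ z : Ω₁ × Ω₂ × Ω₃, |p z - qq p z| with hSdef
  have L3 : (∑ z : Ω₁ × Ω₂ × Ω₃, qq p z * ℓ (f (z.1, z.2.1)) z.2.2)
      - (∑ z : Ω₁ × Ω₂ × Ω₃, p z * ℓ (f (z.1, z.2.1)) z.2.2) ≤ S / 2 := by
    rw [← Finset.sum_sub_distrib]
    have hmax : ∀ z : Ω₁ × Ω₂ × Ω₃,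
        qq p z * ℓ (f (z.1, z.2.1)) z.2.2 - p z * ℓ (f (z.1, z.2.1)) z.2.2
          ≤ (qq p z - p z + |p z - qq p z|) / 2 := by
      intro z
      obtain ⟨hl0, hl1⟩ := hℓ (f (z.1, z.2.1)) z.2.2
      rcases le_or_gt (p z) (qq p z) with h | h
      · rw [abs_sub_comm, abs_of_nonneg (by linarith : (0:ℝ) ≤ qq p z - p z)]
        nlinarith
      · rw [abs_of_nonneg (by linarith : (0:ℝ) ≤ p z - qq p z)]
        nlinarith
    calc (∑ z : Ω₁ × Ω₂ × Ω₃,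
          (qq p z * ℓ (f (z.1, z.2.1)) z.2.2 - p z * ℓ (f (z.1, z.2.1)) z.2.2))
        ≤ ∑ z : Ω₁ × Ω₂ × Ω₃, (qq p z - p z + |p z - qq p z|) / 2 :=
          Finset.sum_le_sum fun z _ => hmax z
      _ = ((∑ z, qq p z) - (∑ z, p z) + S) / 2 := by
          rw [← Finset.sum_div, Finset.sum_add_distrib, Finset.sum_sub_distrib]
      _ = S / 2 := by rw [hq1, hp.2]; ring
  -- Cauchy–Schwarz (Pinsker-type) step
  have hS2 : S ^ 2 ≤ 2 * ∑ z : Ω₁ × Ω₂ × Ω₃, (p z - qq p z) ^ 2 / (p z + qq p z) := by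
    have CS := Finset.sum_mul_sq_le_sq_mul_sq Finset.univ
      (fun z : Ω₁ × Ω₂ × Ω₃ => Real.sqrt (p z + qq p z))
      (fun z : Ω₁ × Ω₂ × Ω₃ => |p z - qq p z| / Real.sqrt (p z + qq p z))
    have e0 : ∀ z : Ω₁ × Ω₂ × Ω₃,
        Real.sqrt (p z + qq p z) * (|p z - qq p z| / Real.sqrt (p z + qq p z))
          = |p z - qq p z| := by
      intro z
      rcases (add_nonneg (hp.1 z) (qq_nonneg p hp z)).eq_or_lt with h | h
      · have hp0 : p z = 0 := le_antisymm (by nlinarith [qq_nonneg p hp z]) (hp.1 z)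
        have hq0 : qq p z = 0 := le_antisymm (by nlinarith [hp.1 z]) (qq_nonneg p hp z)
        simp [hp0, hq0]
      · rw [mul_comm, div_mul_cancel₀ _ (Real.sqrt_pos.2 h).ne']
    have e1 : ∀ z : Ω₁ × Ω₂ × Ω₃, (Real.sqrt (p z + qq p z)) ^ 2 = p z + qq p z :=
      fun z => Real.sq_sqrt (add_nonneg (hp.1 z) (qq_nonneg p hp z))
    have e2 : ∀ z : Ω₁ × Ω₂ × Ω₃,
        (|p z - qq p z| / Real.sqrt (p z + qq p z)) ^ 2
          = (p z - qq p z) ^ 2 / (p z + qq p z) := by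
      intro z
      rw [div_pow, sq_abs, Real.sq_sqrt (add_nonneg (hp.1 z) (qq_nonneg p hp z))]
    rw [Finset.sum_congr rfl fun z _ => e0 z, Finset.sum_congr rfl fun z _ => e1 z,
      Finset.sum_congr rfl fun z _ => e2 z] at CS
    have : (∑ z : Ω₁ × Ω₂ × Ω₃, (p z + qq p z)) = 2 := by
      rw [Finset.sum_add_distrib, hp.2, hq1]; norm_num
    rw [this] at CS
    exact CS
  -- the Pinsker pointwise bound, summed
  have hRKL : ∑ z : Ω₁ × Ω₂ × Ω₃, (p z - qq p z) ^ 2 / (p z + qq p z)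
      ≤ 2 * ∑ z : Ω₁ × Ω₂ × Ω₃, (p z * Real.log (p z / qq p z) - p z + qq p z) := by
    rw [Finset.mul_sum]
    refine Finset.sum_le_sum fun z _ => ?_
    have hq0p : qq p z = 0 → p z = 0 := by
      intro hq0
      by_contra hpz
      exact absurd hq0 (qq_pos p hp ((hp.1 z).lt_of_ne (Ne.symm hpz))).ne'
    have := kl_pt (hp.1 z) (qq_nonneg p hp z) hq0p
    have e : (p z - qq p z) ^ 2 / (2 * (p z + qq p z))
        = (p z - qq p z) ^ 2 / (p z + qq p z) / 2 := by
      rw [div_div]; ring_nf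
    rw [e] at this
    linarith
  have hKLsum : ∑ z : Ω₁ × Ω₂ × Ω₃, (p z * Real.log (p z / qq p z) - p z + qq p z)
      = Real.log 2 * CMI23_1 p := by
    rw [Finset.sum_add_distrib, Finset.sum_sub_distrib, hp.2, hq1, kl_eq_CMI p hp]
    ring
  have hD0 : 0 ≤ (∑ z : Ω₁ × Ω₂ × Ω₃, p z * ℓ (f1 z.1) z.2.2) -
      ∑ z : Ω₁ × Ω₂ × Ω₃, p z * ℓ (f (z.1, z.2.1)) z.2.2 := by linarith
  have hDS : (∑ z : Ω₁ × Ω₂ × Ω₃, p z * ℓ (f1 z.1) z.2.2) -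
      (∑ z : Ω₁ × Ω₂ × Ω₃, p z * ℓ (f (z.1, z.2.1)) z.2.2) ≤ S / 2 := by linarith
  have hDsq := pow_le_pow_left₀ hD0 hDS 2
  have hS0 : 0 ≤ S := Finset.sum_nonneg fun z _ => abs_nonneg _
  have hhalf : (S / 2) ^ 2 = S ^ 2 / 4 := by ring
  have hfin : (S / 2) ^ 2 ≤ Real.log 2 * CMI23_1 p := by
    rw [hhalf]; rw [hKLsum] at hRKL; linarith
  have hCMI0 : 0 ≤ CMI23_1 p := by
    nlinarith [sq_nonneg (S / 2), hfin, hln2pos]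
  calc ((∑ z : Ω₁ × Ω₂ × Ω₃, p z * ℓ (f1 z.1) z.2.2) -
        ∑ z : Ω₁ × Ω₂ × Ω₃, p z * ℓ (f (z.1, z.2.1)) z.2.2) ^ 2
      ≤ (S / 2) ^ 2 := hDsq
    _ ≤ Real.log 2 * CMI23_1 p := hfin
    _ ≤ 1 * CMI23_1 p := mul_le_mul_of_nonneg_right hln2le hCMI0
    _ = CMI23_1 p := one_mul _


end PaperPID
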